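/- Let 𝒰 be a universe and (X, L, s) a 𝒰-counting system, with ≤ the specialization preorder of the topology of closed subsets. Then for all x, z ∈ X: x ≤ z if and only if x ≤_s z, or there exists y ∈ X with x ≤_L y and y ≤_s z. Consequently, the closure of any I ⊆ X is Ī = s^{-∞}I ∪ ⋃{A ∈ dom L | L(A) ∈ s^{-∞}I}, where s^{-∞}I = ⋃_{m∈ℕ} s^{-m}I. -/

import Mathlib

namespace Paper

/-- The union `⋃_{i ∈ I} f(i)` of the values of `f` on elements of `I`. -/
noncomputable def unionImage (f : ZFSet → ZFSet) (I : ZFSet) : ZFSet :=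
  ZFSet.sUnion (@ZFSet.image f (Classical.allZFSetDefinable _) I)

/-- A universe: a transitive set closed under pairing and under unions of
`𝒰`-indexed families of elements of `𝒰`. -/
def IsUniverse (U : ZFSet) : Prop :=
  U.IsTransitive ∧
  (∀ x ∈ U, ∀ y ∈ U, ({x, y} : ZFSet) ∈ U) ∧
  (∀ I ∈ U, ∀ f : ZFSet → ZFSet, (∀ i ∈ I, f i ∈ U) → unionImage f I ∈ U)

variable {X : Type*}

/-- `A ∈ P_𝒰(X)`: the subset `A` of the type `X` is in bijection with some element of `𝒰`. -/
def SmallSet (U : ZFSet) (A : Set X) : Prop :=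
  ∃ B : ZFSet, B ∈ U ∧ Nonempty (A ≃ B.toSet)

/-- `x < y` in the sense `x ≤ y ∧ x ≠ y`, for an arbitrary relation `le`. -/
def ltR (le : X → X → Prop) (x y : X) : Prop := le x y ∧ x ≠ y

/-- The lower complement `S^↧ = {x | ∀ y ∈ S, x < y}`. -/
def lowerComp (le : X → X → Prop) (S : Set X) : Set X := {x | ∀ y ∈ S, ltR le x y}

/-- The upper complement `S^↑ = {x | ∀ y ∈ S, y < x}`. -/
def upperComp (le : X → X → Prop) (S : Set X) : Set X := {x | ∀ y ∈ S, ltR le y x}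

/-- `b` is the incremented join `⋁⁺S`, i.e. the minimum of `S^↑`. -/
def IsIncJoin (le : X → X → Prop) (S : Set X) (b : X) : Prop :=
  b ∈ upperComp le S ∧ ∀ c ∈ upperComp le S, le b c

/-- `b = x⁺`, i.e. `b = ⋁⁺{x}`. -/
def IsSuccOf (le : X → X → Prop) (x b : X) : Prop := IsIncJoin le {x} b

/-- `b` is the join (least upper bound) of `S`. -/
def IsJoin (le : X → X → Prop) (S : Set X) (b : X) : Prop :=
  (∀ y ∈ S, le y b) ∧ ∀ c, (∀ y ∈ S, le y c) → le b c

/-- An ordinal system relative to the universe `U`: a partial order satisfying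
(O1) lower complements of nonempty subsets lie in `P_𝒰(X)`, and
(O2) every member of `P_𝒰(X)` has an incremented join. -/
def IsOrdinalSystem (U : ZFSet) (le : X → X → Prop) : Prop :=
  IsPartialOrder X le ∧
  (∀ S : Set X, S.Nonempty → SmallSet U (lowerComp le S)) ∧
  (∀ S : Set X, SmallSet U S → ∃ b, IsIncJoin le S b)

/-- `I` is successor-closed: `s(I) ⊆ I`. -/
def SuccClosed (s : X → X) (I : Set X) : Prop := ∀ x ∈ I, s x ∈ I

/-- The domain of the limit function of a `𝒰`-counting system (axiom (C1)):
the successor-closed members of `P_𝒰(X)`. -/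
def LDom (U : ZFSet) (s : X → X) : Set (Set X) :=
  {I | SuccClosed s I ∧ SmallSet U I}

/-- A subset `J` is closed when `s⁻¹(J) ⊆ J` and `A ⊆ J` whenever `L(A) ∈ J`. -/
def IsClosedSub (U : ZFSet) (s : X → X) (L : ∀ I ∈ LDom U s, X) (J : Set X) : Prop :=
  (∀ x : X, s x ∈ J → x ∈ J) ∧
  (∀ A (h : A ∈ LDom U s), L A h ∈ J → A ⊆ J)

/-- The closure `Ī` of `I` in the topology of closed subsets: the intersection
of all closed subsets containing `I`. -/
def cl (U : ZFSet) (s : X → X) (L : ∀ I ∈ LDom U s, X) (I : Set X) : Set X :=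
  {x | ∀ J : Set X, IsClosedSub U s L J → I ⊆ J → x ∈ J}

/-- `x ≤_s y`: `s^m(x) = y` for some `m ∈ ℕ`. -/
def leS (s : X → X) (x y : X) : Prop := ∃ m : ℕ, s^[m] x = y

/-- `x ≤_L y`: `x ∈ I` and `L(I) = y` for some `I ∈ dom L`. -/
def leL (U : ZFSet) (s : X → X) (L : ∀ I ∈ LDom U s, X) (x y : X) : Prop :=
  ∃ I, ∃ h : I ∈ LDom U s, x ∈ I ∧ L I h = y

/-- The specialization preorder: `x ≤ y` iff `x ∈ cl {y}`. -/
def leSpec (U : ZFSet) (s : X → X) (L : ∀ I ∈ LDom U s, X) (x y : X) : Prop :=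
  x ∈ cl U s L {y}

/-- Axiom (C2): the limit function only depends on the closure of its argument. -/
def C2 (U : ZFSet) (s : X → X) (L : ∀ I ∈ LDom U s, X) : Prop :=
  ∀ I J (hI : I ∈ LDom U s) (hJ : J ∈ LDom U s),
    cl U s L I = cl U s L J → L I hI = L J hJ

/-- Axiom (C3): `s⁻¹{L(I)} = ∅` and `s(L(I)) ∉ I` for all `I ∈ dom L`. -/
def C3 (U : ZFSet) (s : X → X) (L : ∀ I ∈ LDom U s, X) : Prop :=
  ∀ I (h : I ∈ LDom U s), (∀ x : X, s x ≠ L I h) ∧ s (L I h) ∉ I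

/-- Axiom (C4): `s` is injective, and `L(I) = L(J)` implies `Ī = J̄`. -/
def C4 (U : ZFSet) (s : X → X) (L : ∀ I ∈ LDom U s, X) : Prop :=
  Function.Injective s ∧
  ∀ I J (hI : I ∈ LDom U s) (hJ : J ∈ LDom U s),
    L I hI = L J hJ → cl U s L I = cl U s L J

/-- Axiom (C5): the induction axiom. -/
def C5 (U : ZFSet) (s : X → X) (L : ∀ I ∈ LDom U s, X) : Prop :=
  ∀ J : Set X, SuccClosed s J →
    (∀ I (h : I ∈ LDom U s), I ⊆ J → L I h ∈ J) → J = Set.univ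

/-! ### Auxiliary lemmas -/

section Aux

lemma mem_unionImage {f : ZFSet → ZFSet} {I z : ZFSet} :
    z ∈ unionImage f I ↔ ∃ i ∈ I, z ∈ f i := by
  unfold unionImage
  rw [ZFSet.mem_sUnion]
  constructor
  · rintro ⟨t, ht, hzt⟩
    obtain ⟨i, hi, rfl⟩ := (@ZFSet.mem_image f (Classical.allZFSetDefinable _) I t).mp ht
    exact ⟨i, hi, hzt⟩
  · rintro ⟨i, hi, hz⟩
    exact ⟨f i, (@ZFSet.mem_image f (Classical.allZFSetDefinable _) I (f i)).mpr ⟨i, hi, rfl⟩, hz⟩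

variable {U : ZFSet}

lemma empty_mem_of_mem (hU : IsUniverse U) {b : ZFSet} (hb : b ∈ U) : (∅ : ZFSet) ∈ U := by
  obtain ⟨y, hyU, hy⟩ := ZFSet.regularity U (by rintro rfl; exact (ZFSet.notMem_empty b) hb)
  have : y = ∅ := by
    apply (ZFSet.eq_empty y).mpr
    intro z hz
    have hzU : z ∈ U := hU.1.mem_trans hz hyU
    have : z ∈ U ∩ y := ZFSet.mem_inter.mpr ⟨hzU, hz⟩
    rw [hy] at this
    exact ZFSet.notMem_empty z this
  rwa [this] at hyU

lemma union_mem (hU : IsUniverse U) {x y : ZFSet} (hx : x ∈ U) (hy : y ∈ U) : x ∪ y ∈ U := by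
  have hI : ({x, y} : ZFSet) ∈ U := hU.2.1 x hx y hy
  have := hU.2.2 _ hI id (by
    intro i hi
    rcases ZFSet.mem_pair.mp hi with rfl | rfl <;> assumption)
  have hset : unionImage id ({x, y} : ZFSet) = x ∪ y := by
    apply ZFSet.ext
    intro z
    rw [mem_unionImage, ZFSet.mem_union]
    constructor
    · rintro ⟨i, hi, hz⟩
      rcases ZFSet.mem_pair.mp hi with rfl | rfl
      · exact Or.inl hz
      · exact Or.inr hz
    · rintro (hz | hz)
      · exact ⟨x, ZFSet.mem_pair.mpr (Or.inl rfl), hz⟩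
      · exact ⟨y, ZFSet.mem_pair.mpr (Or.inr rfl), hz⟩
  rwa [hset] at this

lemma insert_mem (hU : IsUniverse U) {x y : ZFSet} (hx : x ∈ U) (hy : y ∈ U) :
    insert y x ∈ U := by
  have hsing : ({y, y} : ZFSet) ∈ U := hU.2.1 y hy y hy
  have : x ∪ ({y, y} : ZFSet) ∈ U := union_mem hU hx hsing
  have hset : x ∪ ({y, y} : ZFSet) = insert y x := by
    apply ZFSet.ext
    intro z
    simp only [ZFSet.mem_union, ZFSet.mem_insert_iff, ZFSet.mem_pair, ZFSet.mem_singleton]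
    tauto
  rwa [hset] at this

/-- The `n`-th von Neumann natural. -/
noncomputable def natZ : ℕ → ZFSet
  | 0 => ∅
  | n + 1 => insert (natZ n) (natZ n)

lemma natZ_mem (hU : IsUniverse U) (h0 : (∅ : ZFSet) ∈ U) (n : ℕ) : natZ n ∈ U := by
  induction n with
  | zero => exact h0
  | succ n ih => exact insert_mem hU ih ih

lemma mk_natZ (n : ℕ) : Cardinal.mk (natZ n).toSet = n := by
  induction n with
  | zero => simp [natZ, (show (∅ : ZFSet).toSet = ∅ from ZFSet.coe_empty)]
  | succ n ih =>
    have hnotmem : natZ n ∉ (natZ n).toSet := by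
      rw [ZFSet.toSet, Set.mem_setOf_eq]; exact ZFSet.mem_irrefl _
    rw [show natZ (n + 1) = insert (natZ n) (natZ n) from rfl, (show ∀ x y : ZFSet, (insert x y).toSet = insert x y.toSet from ZFSet.coe_insert),
      Cardinal.mk_insert hnotmem, ih]
    push_cast
    ring

variable {X : Type*}

lemma smallSet_of_finite (hU : IsUniverse U) (hne : ∃ b : ZFSet, b ∈ U) {F : Set X}
    (hF : F.Finite) : SmallSet U F := by
  obtain ⟨b, hb⟩ := hne
  have h0 := empty_mem_of_mem hU hb
  obtain ⟨n, hn⟩ := Cardinal.lt_aleph0.mp (Cardinal.lt_aleph0_iff_set_finite.mpr hF)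
  refine ⟨natZ n, natZ_mem hU h0 n, ?_⟩
  apply Cardinal.lift_mk_eq'.mp
  rw [hn, mk_natZ, Cardinal.lift_natCast, Cardinal.lift_natCast]

lemma smallSet_union (hU : IsUniverse U) {A B : Set X}
    (hA : SmallSet U A) (hB : SmallSet U B) : SmallSet U (A ∪ B) := by
  obtain ⟨B1, hB1, ⟨e1⟩⟩ := hA
  obtain ⟨B2, hB2, ⟨e2⟩⟩ := hB
  by_cases hfin : (A ∪ B).Finite
  · exact smallSet_of_finite hU ⟨B1, hB1⟩ hfin
  · have hinf : Cardinal.aleph0 ≤ Cardinal.mk ↥(A ∪ B) := by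
      exact Cardinal.infinite_iff.mp (Set.infinite_coe_iff.mpr hfin)
    rcases le_total (Cardinal.mk ↥B) (Cardinal.mk ↥A) with hle | hle
    · have hAinf : Cardinal.aleph0 ≤ Cardinal.mk ↥A := by
        by_contra hc
        push_neg at hc
        have : Cardinal.mk ↥(A ∪ B) < Cardinal.aleph0 :=
          lt_of_le_of_lt ((Cardinal.mk_union_le A B).trans (add_le_add le_rfl hle))
            (Cardinal.add_lt_aleph0 hc hc)
        exact absurd (lt_of_le_of_lt hinf this) (lt_irrefl _)
      have hmk : Cardinal.mk ↥(A ∪ B) = Cardinal.mk ↥A := by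
        refine le_antisymm ?_ (Cardinal.mk_le_mk_of_subset Set.subset_union_left)
        calc Cardinal.mk ↥(A ∪ B) ≤ Cardinal.mk ↥A + Cardinal.mk ↥B := Cardinal.mk_union_le A B
          _ = max (Cardinal.mk ↥A) (Cardinal.mk ↥B) := Cardinal.add_eq_max hAinf
          _ = Cardinal.mk ↥A := max_eq_left hle
      obtain ⟨e⟩ := Cardinal.eq.mp hmk
      exact ⟨B1, hB1, ⟨e.trans e1⟩⟩
    · have hBinf : Cardinal.aleph0 ≤ Cardinal.mk ↥B := by
        by_contra hc
        push_neg at hc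
        have : Cardinal.mk ↥(A ∪ B) < Cardinal.aleph0 :=
          lt_of_le_of_lt ((Cardinal.mk_union_le A B).trans (add_le_add hle le_rfl))
            (Cardinal.add_lt_aleph0 hc hc)
        exact absurd (lt_of_le_of_lt hinf this) (lt_irrefl _)
      have hmk : Cardinal.mk ↥(A ∪ B) = Cardinal.mk ↥B := by
        refine le_antisymm ?_ (Cardinal.mk_le_mk_of_subset Set.subset_union_right)
        calc Cardinal.mk ↥(A ∪ B) ≤ Cardinal.mk ↥A + Cardinal.mk ↥B := Cardinal.mk_union_le A B
          _ = max (Cardinal.mk ↥A) (Cardinal.mk ↥B) := Cardinal.add_eq_max' hBinf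
          _ = Cardinal.mk ↥B := max_eq_right hle
      obtain ⟨e⟩ := Cardinal.eq.mp hmk
      exact ⟨B2, hB2, ⟨e.trans e2⟩⟩

variable {s : X → X} {L : ∀ I ∈ LDom U s, X}

lemma cl_isClosed (I : Set X) : IsClosedSub U s L (cl U s L I) := by
  constructor
  · intro x hx J hJ hIJ
    exact hJ.1 x (hx J hJ hIJ)
  · intro A hA hLA a ha J hJ hIJ
    exact hJ.2 A hA (hLA J hJ hIJ) ha

lemma subset_cl (I : Set X) : I ⊆ cl U s L I := fun _ hx _ _ hIJ => hIJ hx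

lemma cl_min {I J : Set X} (hJ : IsClosedSub U s L J) (hIJ : I ⊆ J) : cl U s L I ⊆ J :=
  fun _ hx => hx J hJ hIJ

lemma cl_mono {I J : Set X} (hIJ : I ⊆ J) : cl U s L I ⊆ cl U s L J :=
  cl_min (cl_isClosed J) (hIJ.trans (subset_cl J))

lemma iterate_mem_closed {J : Set X} (hJ : IsClosedSub U s L J) :
    ∀ (k : ℕ) (y : X), s^[k] y ∈ J → y ∈ J := by
  intro k
  induction k with
  | zero => intro y hy; exact hy
  | succ k ih =>
    intro y hy
    rw [Function.iterate_succ_apply] at hy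
    exact hJ.1 y (ih (s y) hy)

lemma chain_ext (hU : IsUniverse U) (hC2 : C2 U s L) {A : Set X} (hA : A ∈ LDom U s)
    {x : X} {m : ℕ} (hx : s^[m] x ∈ A) :
    ∃ (A' : Set X) (hA' : A' ∈ LDom U s), x ∈ A' ∧ A ⊆ A' ∧ L A' hA' = L A hA := by
  classical
  set F : Set X := (fun j => s^[j] x) '' Set.Iic m with hF
  set A' : Set X := A ∪ F with hA'def
  have hsc : SuccClosed s A' := by
    rintro y (hy | ⟨j, hj, rfl⟩)
    · exact Or.inl (hA.1 y hy)
    · rcases lt_or_eq_of_le (Set.mem_Iic.mp hj) with hlt | rfl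
      · exact Or.inr ⟨j + 1, Set.mem_Iic.mpr hlt, Function.iterate_succ_apply' s j x⟩
      · exact Or.inl (hA.1 _ hx)
  have hsmall : SmallSet U A' :=
    smallSet_union hU hA.2
      (smallSet_of_finite hU (hA.2.imp fun b hb => hb.1) ((Set.finite_Iic m).image _))
  have hA' : A' ∈ LDom U s := ⟨hsc, hsmall⟩
  have hcl : cl U s L A' = cl U s L A := by
    apply Set.Subset.antisymm
    · apply cl_min (cl_isClosed A)
      rintro y (hy | ⟨j, hj, rfl⟩)
      · exact subset_cl A hy
      · apply iterate_mem_closed (cl_isClosed A) (m - j)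
        rw [← Function.iterate_add_apply, Nat.sub_add_cancel (Set.mem_Iic.mp hj)]
        exact subset_cl A hx
    · exact cl_mono Set.subset_union_left
  exact ⟨A', hA', Or.inr ⟨0, by simp, rfl⟩, Set.subset_union_left, hC2 A' A hA' hA hcl⟩

lemma union_ext (hU : IsUniverse U) (hC2 : C2 U s L) {A B : Set X}
    (hA : A ∈ LDom U s) (hB : B ∈ LDom U s) {m : ℕ} (hm : s^[m] (L A hA) ∈ B) :
    ∃ (B' : Set X) (hB' : B' ∈ LDom U s), A ⊆ B' ∧ L B' hB' = L B hB := by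
  obtain ⟨B1, hB1, hLB1, hBB1, hLeq⟩ := chain_ext hU hC2 hB hm
  set B' : Set X := B1 ∪ A with hB'def
  have hsc : SuccClosed s B' := by
    rintro y (hy | hy)
    · exact Or.inl (hB1.1 y hy)
    · exact Or.inr (hA.1 y hy)
  have hB' : B' ∈ LDom U s := ⟨hsc, smallSet_union hU hB1.2 hA.2⟩
  have hAclB1 : A ⊆ cl U s L B1 := (cl_isClosed B1).2 A hA (subset_cl B1 hLB1)
  have hcl : cl U s L B' = cl U s L B1 := by
    apply Set.Subset.antisymm
    · apply cl_min (cl_isClosed B1)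
      rintro y (hy | hy)
      · exact subset_cl B1 hy
      · exact hAclB1 hy
    · exact cl_mono Set.subset_union_left
  exact ⟨B', hB', Set.subset_union_right, (hC2 B' B1 hB' hB1 hcl).trans hLeq⟩

lemma cl_eq (hU : IsUniverse U) (hC2 : C2 U s L) (I : Set X) :
    cl U s L I =
      {x : X | ∃ m : ℕ, s^[m] x ∈ I} ∪
      {x : X | ∃ A, ∃ h : A ∈ LDom U s, x ∈ A ∧
        L A h ∈ {x : X | ∃ m : ℕ, s^[m] x ∈ I}} := by
  set S : Set X := {x : X | ∃ m : ℕ, s^[m] x ∈ I} with hS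
  set C : Set X := S ∪ {x : X | ∃ A, ∃ h : A ∈ LDom U s, x ∈ A ∧ L A h ∈ S} with hC
  have hclosed : IsClosedSub U s L C := by
    constructor
    · rintro x (⟨m, hm⟩ | ⟨A, hA, hsxA, hLA⟩)
      · exact Or.inl ⟨m + 1, by rwa [Function.iterate_succ_apply]⟩
      · obtain ⟨A', hA', hxA', _, hLeq⟩ :=
          chain_ext hU hC2 hA (show s^[1] x ∈ A by simpa using hsxA)
        exact Or.inr ⟨A', hA', hxA', hLeq ▸ hLA⟩
    · rintro A hA (hLA | ⟨B, hB, hLAB, hLB⟩) a ha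
      · exact Or.inr ⟨A, hA, ha, hLA⟩
      · obtain ⟨B', hB', hAB', hLeq⟩ :=
          union_ext hU hC2 hA hB (show s^[0] (L A hA) ∈ B from hLAB)
        exact Or.inr ⟨B', hB', hAB' ha, hLeq ▸ hLB⟩
  apply Set.Subset.antisymm
  · exact cl_min hclosed (fun x hx => Or.inl ⟨0, hx⟩)
  · rintro x (⟨m, hm⟩ | ⟨A, hA, hxA, m, hm⟩)
    · intro J hJ hIJ
      exact iterate_mem_closed hJ m x (hIJ hm)
    · intro J hJ hIJ
      exact hJ.2 A hA (iterate_mem_closed hJ m _ (hIJ hm)) hxA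

end Aux

theorem stmt_17 (U : ZFSet) (hU : IsUniverse U) {X : Type*}
    (s : X → X) (L : ∀ I ∈ LDom U s, X) (hC2 : C2 U s L) :
    (∀ x z : X, leSpec U s L x z ↔
      (leS s x z ∨ ∃ y : X, leL U s L x y ∧ leS s y z)) ∧
    (∀ I : Set X, cl U s L I =
      {x : X | ∃ m : ℕ, s^[m] x ∈ I} ∪
      {x : X | ∃ A, ∃ h : A ∈ LDom U s, x ∈ A ∧
        L A h ∈ {x : X | ∃ m : ℕ, s^[m] x ∈ I}}) := by
  refine ⟨?_, fun I => cl_eq hU hC2 I⟩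
  intro x z
  have h := cl_eq hU hC2 (U := U) (s := s) (L := L) ({z} : Set X)
  unfold leSpec
  rw [h]
  constructor
  · rintro (⟨m, hm⟩ | ⟨A, hA, hxA, m, hm⟩)
    · exact Or.inl ⟨m, hm⟩
    · exact Or.inr ⟨L A hA, ⟨A, hA, hxA, rfl⟩, ⟨m, hm⟩⟩
  · rintro (⟨m, hm⟩ | ⟨y, ⟨A, hA, hxA, hLA⟩, m, hm⟩)
    · exact Or.inl ⟨m, hm⟩
    · exact Or.inr ⟨A, hA, hxA, m, by rw [hLA]; exact hm⟩

end Paper
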